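/- Consider a jointly-convex GNEP in which player ν solves min_{x^ν} θ_ν(x) s.t. g(x) ≤ 0 and h(x) ≤ 0, where g : ℝ^n → ℝ^m and h : ℝ^n → ℝ^p have convex continuously differentiable components and each θ_ν is continuously differentiable and convex as a function of x^ν for every fixed x^{−ν}. Let (x^k) be generated by the variational-equilibrium augmented Lagrangian method (Algorithm 5.1) under Assumption 5.1 with ε_k → 0 and ε'_k → 0, and let x̄ be a limit point of (x^k). If the GNEP has feasible points and the concatenated map x ↦ (g(x), h(x)) satisfies the classical CPLD condition at x̄, then x̄ is feasible and solves the GNEP. -/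

import Mathlib

open Filter Topology Finset Function RealInnerProductSpace

/-- The strategy space of a GNEP: one Euclidean block per player. -/
abbrev Strat {N : ℕ} (n : Fin N → ℕ) := (ν : Fin N) → EuclideanSpace ℝ (Fin (n ν))

/-- Partial gradient of `f : Strat n → ℝ` with respect to player `ν`'s block at `x`. -/
noncomputable def pgrad {N : ℕ} {n : Fin N → ℕ} (ν : Fin N)
    (f : Strat n → ℝ) (x : Strat n) : EuclideanSpace ℝ (Fin (n ν)) :=
  gradient (fun z => f (Function.update x ν z)) (x ν)

/-- Positive linear dependence of a family on a finite index set. -/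
def PosLinDep {ι E : Type*} [AddCommGroup E] [Module ℝ E]
    (s : Finset ι) (v : ι → E) : Prop :=
  ∃ a : ι → ℝ, (∀ i, 0 ≤ a i) ∧ (∃ i ∈ s, a i ≠ 0) ∧ ∑ i ∈ s, a i • v i = 0

/-- Linear dependence of a family on a finite index set. -/
def LinDep {ι E : Type*} [AddCommGroup E] [Module ℝ E]
    (s : Finset ι) (v : ι → E) : Prop :=
  ∃ a : ι → ℝ, (∃ i ∈ s, a i ≠ 0) ∧ ∑ i ∈ s, a i • v i = 0

/-- CPLD with respect to player `ν`. -/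
def CPLDnu {N : ℕ} {n : Fin N → ℕ} {ι : Type*} (ν : Fin N)
    (c : ι → Strat n → ℝ) (x : Strat n) : Prop :=
  ∀ I : Finset ι, (∀ i ∈ I, c i x = 0) →
    PosLinDep I (fun i => pgrad ν (c i) x) →
    ∃ U ∈ 𝓝 x, ∀ y ∈ U, LinDep I (fun i => pgrad ν (c i) y)

/-- EMFCQ with respect to player `ν`. -/
def EMFCQnu {N : ℕ} {n : Fin N → ℕ} {ι : Type*} (ν : Fin N)
    (c : ι → Strat n → ℝ) (x : Strat n) : Prop :=
  ∃ d : EuclideanSpace ℝ (Fin (n ν)), ∀ i, 0 ≤ c i x → inner (𝕜 := ℝ) (pgrad ν (c i) x) d < 0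


section Pgrad
variable {N : ℕ} {n : Fin N → ℕ}

noncomputable def updL (ν : Fin N) : EuclideanSpace ℝ (Fin (n ν)) →L[ℝ] Strat n :=
  ContinuousLinearMap.pi (Pi.single ν (ContinuousLinearMap.id ℝ _))

lemma updL_apply (ν : Fin N) (v : EuclideanSpace ℝ (Fin (n ν))) :
    updL ν v = Pi.single ν v := by
  funext j
  rcases eq_or_ne j ν with rfl | hj
  · simp [updL]
  · simp [updL, Pi.single_eq_of_ne hj]

lemma hasFDerivAt_updateFun {f : Strat n → ℝ} {x : Strat n} (ν : Fin N)
    (hf : DifferentiableAt ℝ f x) :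
    HasFDerivAt (fun z => f (Function.update x ν z)) ((fderiv ℝ f x).comp (updL ν)) (x ν) := by
  have h1 : HasFDerivAt (Function.update x ν) (updL ν) (x ν) := hasFDerivAt_update x (x ν)
  have h2 : Function.update x ν (x ν) = x := Function.update_eq_self ν x
  have h3 : HasFDerivAt f (fderiv ℝ f x) (Function.update x ν (x ν)) := by
    rw [h2]; exact hf.hasFDerivAt
  exact HasFDerivAt.comp (x ν) h3 h1

lemma pgrad_eq_clm {f : Strat n → ℝ} {x : Strat n} (ν : Fin N)
    (hf : DifferentiableAt ℝ f x) :
    pgrad ν f x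
      = (InnerProductSpace.toDual ℝ _).symm ((fderiv ℝ f x).comp (updL ν)) := by
  rw [pgrad, gradient, (hasFDerivAt_updateFun ν hf).fderiv]

lemma pgrad_hasGradientAt {f : Strat n → ℝ} {x : Strat n} (ν : Fin N)
    (hf : DifferentiableAt ℝ f x) :
    HasGradientAt (fun z => f (Function.update x ν z)) (pgrad ν f x) (x ν) := by
  rw [pgrad_eq_clm ν hf]
  apply hasGradientAt_iff_hasFDerivAt.2
  simpa using hasFDerivAt_updateFun ν hf

lemma inner_pgrad {f : Strat n → ℝ} {x : Strat n} (ν : Fin N)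
    (hf : DifferentiableAt ℝ f x) (v : EuclideanSpace ℝ (Fin (n ν))) :
    ⟪pgrad ν f x, v⟫ = fderiv ℝ f x (Pi.single ν v) := by
  rw [pgrad_eq_clm ν hf, InnerProductSpace.toDual_symm_apply]
  simp [updL_apply]

lemma pgrad_continuous {f : Strat n → ℝ} (hf : ContDiff ℝ 1 f) (ν : Fin N) :
    Continuous (fun x => pgrad ν f x) := by
  have hrw : (fun x => pgrad ν f x)
      = fun x => (InnerProductSpace.toDual ℝ _).symm ((fderiv ℝ f x).comp (updL ν)) :=
    funext fun x => pgrad_eq_clm ν ((hf.differentiable one_ne_zero) x)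
  rw [hrw]
  have hT : Continuous fun A : Strat n →L[ℝ] ℝ => A.comp (updL ν) := by
    apply (LipschitzWith.of_dist_le_mul (K := ‖updL (n := n) ν‖₊) ?_).continuous
    intro A A'
    rw [dist_eq_norm, dist_eq_norm, ← ContinuousLinearMap.sub_comp]
    calc ‖(A - A').comp (updL ν)‖ ≤ ‖A - A'‖ * ‖updL (n := n) ν‖ :=
          ContinuousLinearMap.opNorm_comp_le _ _
      _ = ↑‖updL (n := n) ν‖₊ * ‖A - A'‖ := by rw [mul_comm]; norm_cast
  exact (LinearIsometryEquiv.continuous _).comp (hT.comp (hf.continuous_fderiv one_ne_zero))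

end Pgrad
section ConvexIneq

lemma convex_fderiv_ineq {E : Type*} [NormedAddCommGroup E] [NormedSpace ℝ E] {f : E → ℝ}
    (hf : ConvexOn ℝ Set.univ f) {x : E} {D : E →L[ℝ] ℝ} (hD : HasFDerivAt f D x) (z : E) :
    f x + D (z - x) ≤ f z := by
  set q : ℝ → ℝ := fun t => f (x + t • (z - x)) with hq_def
  have hq : ConvexOn ℝ Set.univ q := by
    refine ⟨convex_univ, fun t1 _ t2 _ a b ha hb hab => ?_⟩
    have hb' : b = 1 - a := by linarith
    subst hb'
    have hco : x + (a * t1 + (1 - a) * t2) • (z - x)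
        = a • (x + t1 • (z - x)) + (1 - a) • (x + t2 • (z - x)) := by module
    simp only [hq_def, smul_eq_mul, hco]
    exact hf.2 (Set.mem_univ _) (Set.mem_univ _) ha hb (by linarith)
  have hcurve : HasDerivAt (fun t : ℝ => x + t • (z - x)) (z - x) 0 := by
    simpa using ((hasDerivAt_id (0 : ℝ)).smul_const (z - x)).const_add x
  have h0 : x + (0 : ℝ) • (z - x) = x := by simp
  have hD' : HasFDerivAt f D (x + (0 : ℝ) • (z - x)) := by rw [h0]; exact hD
  have hq' : HasDerivAt q (D (z - x)) 0 := hD'.comp_hasDerivAt 0 hcurve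
  have hsl := hq.le_slope_of_hasDerivAt (Set.mem_univ (0 : ℝ)) (Set.mem_univ (1 : ℝ))
    one_pos hq'
  have hslope : slope q 0 1 = q 1 - q 0 := by simp [slope_def_field]
  have hq1 : q 1 = f z := by simp [hq_def]
  have hq0 : q 0 = f x := by simp [hq_def]
  rw [hslope, hq1, hq0] at hsl
  linarith

lemma convexOn_gradient_ineq {F : Type*} [NormedAddCommGroup F] [InnerProductSpace ℝ F]
    [CompleteSpace F]
    {ψ : F → ℝ} (hψ : ConvexOn ℝ Set.univ ψ) {w G : F} (hG : HasGradientAt ψ G w) (z : F) :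
    ψ w + ⟪G, z - w⟫ ≤ ψ z := by
  have := convex_fderiv_ineq hψ hG.hasFDerivAt z
  simpa [InnerProductSpace.toDual_apply_apply] using this

variable {N : ℕ} {n : Fin N → ℕ}

lemma update_combo (x : Strat n) (ν : Fin N) (z1 z2 : EuclideanSpace ℝ (Fin (n ν)))
    {a b : ℝ} (hab : a + b = 1) :
    Function.update x ν (a • z1 + b • z2)
      = a • Function.update x ν z1 + b • Function.update x ν z2 := by
  funext j
  rcases eq_or_ne j ν with rfl | hj
  · simp
  · simp only [Function.update_of_ne hj, Pi.add_apply, Pi.smul_apply, Function.update_of_ne hj]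
    exact (Convex.combo_self hab (x j)).symm

lemma convexOn_update {f : Strat n → ℝ} (hconv : ConvexOn ℝ Set.univ f) (x : Strat n)
    (ν : Fin N) : ConvexOn ℝ Set.univ (fun w => f (Function.update x ν w)) := by
  refine ⟨convex_univ, fun z1 _ z2 _ a b ha hb hab => ?_⟩
  show f (Function.update x ν (a • z1 + b • z2)) ≤ _
  rw [update_combo x ν z1 z2 hab]
  exact hconv.2 (Set.mem_univ _) (Set.mem_univ _) ha hb hab

lemma player_ineq {f : Strat n → ℝ} {x : Strat n} {ν : Fin N}
    (hconv : ConvexOn ℝ Set.univ (fun w => f (Function.update x ν w)))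
    (hdiff : DifferentiableAt ℝ f x) (z : EuclideanSpace ℝ (Fin (n ν))) :
    f x + ⟪pgrad ν f x, z - x ν⟫ ≤ f (Function.update x ν z) := by
  have := convexOn_gradient_ineq hconv (pgrad_hasGradientAt ν hdiff) z
  simpa [Function.update_eq_self] using this

lemma joint_ineq {f : Strat n → ℝ} (hconv : ConvexOn ℝ Set.univ f)
    {x : Strat n} (hdiff : DifferentiableAt ℝ f x) (z : Strat n) :
    f x + ∑ ν, ⟪pgrad ν f x, z ν - x ν⟫ ≤ f z := by
  have h1 := convex_fderiv_ineq hconv hdiff.hasFDerivAt z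
  have h2 : z - x = ∑ ν, Pi.single ν (z ν - x ν) := by
    have := Finset.univ_sum_single (z - x)
    simpa using this.symm
  have h3 : fderiv ℝ f x (z - x) = ∑ ν, ⟪pgrad ν f x, z ν - x ν⟫ := by
    rw [h2, map_sum]
    exact Finset.sum_congr rfl fun ν _ => (inner_pgrad ν hdiff _).symm
  rw [h3] at h1
  exact h1

end ConvexIneq
lemma caratheodory {ι E : Type*} [DecidableEq ι] [AddCommGroup E] [Module ℝ E] (w : ι → E) :
    ∀ (I : Finset ι) (a : ι → ℝ), (∀ i, 0 ≤ a i) →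
    ∃ J, J ⊆ I ∧ ∃ d : ι → ℝ, (∀ i, 0 ≤ d i) ∧ (∀ i, i ∉ J → d i = 0) ∧
      ∑ i ∈ J, d i • w i = ∑ i ∈ I, a i • w i ∧ ¬ LinDep J w := by
  intro I
  induction I using Finset.strongInductionOn with
  | _ I IH =>
    intro a ha
    by_cases hdep : LinDep I w
    case neg =>
      refine ⟨I, subset_rfl, fun i => if i ∈ I then a i else 0, ?_, ?_, ?_, hdep⟩
      · intro i; by_cases hi : i ∈ I <;> simp [hi, ha i]
      · intro i hi; simp [hi]
      · exact Finset.sum_congr rfl fun i hi => by simp [hi]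
    case pos =>
      suffices key : ∀ c : ι → ℝ, ∑ i ∈ I, c i • w i = 0 → (∃ i ∈ I, 0 < c i) →
          ∃ J, J ⊆ I ∧ ∃ d : ι → ℝ, (∀ i, 0 ≤ d i) ∧ (∀ i, i ∉ J → d i = 0) ∧
            ∑ i ∈ J, d i • w i = ∑ i ∈ I, a i • w i ∧ ¬ LinDep J w by
        obtain ⟨c, ⟨i0, hi0I, hi0⟩, hsum⟩ := hdep
        rcases lt_or_gt_of_ne hi0 with hneg | hpos
        · refine key (-c) ?_ ⟨i0, hi0I, by simpa using hneg⟩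
          simp only [Pi.neg_apply, neg_smul, Finset.sum_neg_distrib, hsum, neg_zero]
        · exact key c hsum ⟨i0, hi0I, hpos⟩
      intro c hsum hex
      classical
      set T : Finset ι := I.filter (fun i => 0 < c i) with hT_def
      have hTne : T.Nonempty := by
        obtain ⟨i0, hi0I, hi0⟩ := hex
        exact ⟨i0, Finset.mem_filter.2 ⟨hi0I, hi0⟩⟩
      obtain ⟨i1, hi1T, hi1min⟩ := T.exists_min_image (fun i => a i / c i) hTne
      have hi1I : i1 ∈ I := (Finset.mem_filter.1 hi1T).1
      have hci1 : 0 < c i1 := (Finset.mem_filter.1 hi1T).2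
      set t : ℝ := a i1 / c i1 with ht_def
      have ht0 : 0 ≤ t := div_nonneg (ha i1) hci1.le
      set a' : ι → ℝ := fun i => a i - t * c i with ha'_def
      have ha'nonneg : ∀ i ∈ I, 0 ≤ a' i := by
        intro i hiI
        by_cases hci : 0 < c i
        · have hiT : i ∈ T := Finset.mem_filter.2 ⟨hiI, hci⟩
          have := hi1min i hiT
          have h2 : t * c i ≤ a i := by
            rw [ht_def]
            exact (le_div_iff₀ hci).1 this
          simpa [ha'_def] using sub_nonneg.2 h2
        · push_neg at hci
          have : t * c i ≤ 0 := mul_nonpos_of_nonneg_of_nonpos ht0 hci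
          have := ha i
          simp only [ha'_def]
          linarith
      have ha'i1 : a' i1 = 0 := by
        simp only [ha'_def, ht_def]
        field_simp
        ring
      have hsum' : ∑ i ∈ I.erase i1, a' i • w i = ∑ i ∈ I, a i • w i := by
        rw [Finset.sum_erase_eq_sub hi1I, ha'i1, zero_smul, sub_zero]
        have : ∀ i ∈ I, a' i • w i = a i • w i - t • (c i • w i) := by
          intro i _
          simp only [ha'_def, sub_smul, mul_smul]
        rw [Finset.sum_congr rfl this, Finset.sum_sub_distrib, ← Finset.smul_sum, hsum,
          smul_zero, sub_zero]
      set aNew : ι → ℝ := fun i => if i ∈ I.erase i1 then a' i else 0 with haNew_def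
      have haNewnonneg : ∀ i, 0 ≤ aNew i := by
        intro i
        by_cases hi : i ∈ I.erase i1
        · simp only [haNew_def, if_pos hi]
          exact ha'nonneg i (Finset.mem_of_mem_erase hi)
        · simp only [haNew_def, if_neg hi]; exact le_rfl
      obtain ⟨J, hJsub, d, hd0, hdz, hdsum, hJindep⟩ :=
        IH (I.erase i1) (Finset.erase_ssubset hi1I) aNew haNewnonneg
      refine ⟨J, hJsub.trans (Finset.erase_subset _ _), d, hd0, hdz, ?_, hJindep⟩
      rw [hdsum, ← hsum']
      refine Finset.sum_congr rfl fun i hi => ?_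
      show (if i ∈ I.erase i1 then a' i else 0) • w i = a' i • w i
      rw [if_pos hi]
lemma akkt_to_kkt {N : ℕ} {n : Fin N → ℕ} {ι : Type*} [Fintype ι] [DecidableEq ι]
    (c : ι → Strat n → ℝ) (hc : ∀ i, ContDiff ℝ 1 (c i)) (xbar : Strat n)
    (hCPLD : ∀ I : Finset ι, (∀ j ∈ I, c j xbar = 0) →
      PosLinDep I (fun j => (fun ν => pgrad ν (c j) xbar : Strat n)) →
      ∃ U ∈ 𝓝 xbar, ∀ z ∈ U, LinDep I (fun j => (fun ν => pgrad ν (c j) z : Strat n)))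
    (A : Finset ι) (hA : ∀ i ∈ A, c i xbar = 0)
    (y : ℕ → Strat n) (hy : Tendsto y atTop (𝓝 xbar))
    (b : ℕ → ι → ℝ) (hb : ∀ k i, 0 ≤ b k i)
    (G : ℕ → Strat n) (Ginf : Strat n) (hG : Tendsto G atTop (𝓝 Ginf))
    (hS : Tendsto (fun k => G k + ∑ i ∈ A, b k i • (fun ν => pgrad ν (c i) (y k) : Strat n))
      atTop (𝓝 0)) :
    ∃ β : ι → ℝ, (∀ i, 0 ≤ β i) ∧
      Ginf + ∑ i ∈ A, β i • (fun ν => pgrad ν (c i) xbar : Strat n) = 0 := by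
  classical
  set W : ι → Strat n → Strat n := fun i z => (fun ν => pgrad ν (c i) z) with hW_def
  have hWcont : ∀ i, Continuous (W i) :=
    fun i => continuous_pi fun ν => pgrad_continuous (hc i) ν
  -- Carathéodory at each step
  have hcar := fun k => caratheodory (fun i => W i (y k)) A (b k) (hb k)
  choose J hJsub d hd0 hdz hdsum hindep using hcar
  have hvA : ∀ k, ∑ i ∈ A, d k i • W i (y k) = ∑ i ∈ A, b k i • W i (y k) := by
    intro k
    rw [← hdsum k]
    exact (Finset.sum_subset (hJsub k) fun i _ hi => by rw [hdz k i hi, zero_smul]).symm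
  have hS' : Tendsto (fun k => G k + ∑ i ∈ A, d k i • W i (y k)) atTop (𝓝 0) := by
    have : (fun k => G k + ∑ i ∈ A, d k i • W i (y k))
        = fun k => G k + ∑ i ∈ A, b k i • W i (y k) := funext fun k => by rw [hvA k]
    rw [this]; exact hS
  set t : ℕ → ℝ := fun k => ∑ i ∈ A, d k i with ht_def
  have ht0 : ∀ k, 0 ≤ t k := fun k => Finset.sum_nonneg fun i _ => hd0 k i
  have hdlet : ∀ k i, d k i ≤ t k := by
    intro k i
    by_cases hi : i ∈ A
    · exact Finset.single_le_sum (fun i _ => hd0 k i) hi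
    · rw [hdz k i (fun hmem => hi (hJsub k hmem))]; exact ht0 k
  by_cases hbd : ∃ C, ∀ k, t k ≤ C
  · -- bounded multipliers
    obtain ⟨C, hC⟩ := hbd
    set C0 : ℝ := max C 0 with hC0
    have hdK : ∀ k, d k ∈ Set.pi Set.univ (fun _ : ι => Set.Icc (0:ℝ) C0) := by
      intro k
      rw [Set.mem_univ_pi]
      exact fun i => ⟨hd0 k i, le_trans (hdlet k i) (le_trans (hC k) (le_max_left _ _))⟩
    have hcpt : IsCompact (Set.pi Set.univ (fun _ : ι => Set.Icc (0:ℝ) C0)) :=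
      isCompact_univ_pi fun _ => isCompact_Icc
    obtain ⟨β, hβmem, σ, hσmono, hσtend⟩ := hcpt.tendsto_subseq hdK
    have hβ0 : ∀ i, 0 ≤ β i := fun i => ((Set.mem_univ_pi.1 hβmem) i).1
    have hκ : Tendsto σ atTop atTop := hσmono.tendsto_atTop
    have hvlim : Tendsto (fun q => ∑ i ∈ A, d (σ q) i • W i (y (σ q))) atTop
        (𝓝 (∑ i ∈ A, β i • W i xbar)) := by
      refine tendsto_finset_sum _ fun i _ => Tendsto.smul ?_ ?_
      · exact (tendsto_pi_nhds.1 hσtend) i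
      · exact ((hWcont i).tendsto xbar).comp (hy.comp hκ)
    have heq : Ginf + ∑ i ∈ A, β i • W i xbar = 0 :=
      tendsto_nhds_unique ((hG.comp hκ).add hvlim) (hS'.comp hκ)
    exact ⟨β, hβ0, heq⟩
  · -- unbounded multipliers: contradiction with CPLD
    exfalso
    push_neg at hbd
    have hfreq : ∀ q : ℕ, ∃ᶠ k in atTop, (q : ℝ) < t k := by
      intro q
      by_contra hcon
      rw [not_frequently] at hcon
      rw [eventually_atTop] at hcon
      obtain ⟨M, hM⟩ := hcon
      obtain ⟨k, hk⟩ := hbd ((q : ℝ) + ∑ j ∈ Finset.range M, t j)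
      have hsumnn : 0 ≤ ∑ j ∈ Finset.range M, t j :=
        Finset.sum_nonneg fun j _ => ht0 j
      rcases lt_or_ge k M with hkM | hkM
      · have h1 : t k ≤ ∑ j ∈ Finset.range M, t j :=
          Finset.single_le_sum (fun j _ => ht0 j) (Finset.mem_range.2 hkM)
        have : (0:ℝ) ≤ (q:ℝ) := Nat.cast_nonneg q
        linarith
      · have h1 : ¬ (q:ℝ) < t k := hM k hkM
        push_neg at h1
        have : (0:ℝ) ≤ (q:ℝ) := Nat.cast_nonneg q
        linarith
    obtain ⟨σ0, hσ0mono, hσ0⟩ := extraction_forall_of_frequently hfreq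
    have htσ0 : Tendsto (fun q => t (σ0 q)) atTop atTop :=
      tendsto_atTop_mono (fun q => (hσ0 q).le) tendsto_natCast_atTop_atTop
    have htpos : ∀ q, 0 < t (σ0 q) := fun q => lt_of_le_of_lt (Nat.cast_nonneg q) (hσ0 q)
    -- constant Carathéodory index set
    obtain ⟨J0, hJ0inf'⟩ := Finite.exists_infinite_fiber (fun q => J (σ0 q))
    have hJ0inf : {q | J (σ0 q) = J0}.Infinite := by
      rw [← Set.infinite_coe_iff]
      exact hJ0inf'
    set σ1 : ℕ → ℕ := Nat.nth (fun q => J (σ0 q) = J0) with hσ1_def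
    have hσ1mono : StrictMono σ1 := Nat.nth_strictMono hJ0inf
    have hJconst : ∀ q, J (σ0 (σ1 q)) = J0 := fun q => Nat.nth_mem_of_infinite hJ0inf q
    -- normalized coefficients
    set e : ℕ → ι → ℝ := fun q i => d (σ0 (σ1 q)) i / t (σ0 (σ1 q)) with he_def
    have heK : ∀ q, e q ∈ Set.pi Set.univ (fun _ : ι => Set.Icc (0:ℝ) 1) := by
      intro q
      rw [Set.mem_univ_pi]
      intro i
      constructor
      · exact div_nonneg (hd0 _ i) (htpos (σ1 q)).le
      · rw [div_le_one (htpos (σ1 q))]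
        exact hdlet _ i
    have hcpt : IsCompact (Set.pi Set.univ (fun _ : ι => Set.Icc (0:ℝ) 1)) :=
      isCompact_univ_pi fun _ => isCompact_Icc
    obtain ⟨β, hβmem, σ2, hσ2mono, hσ2tend⟩ := hcpt.tendsto_subseq heK
    have hβ0 : ∀ i, 0 ≤ β i := fun i => ((Set.mem_univ_pi.1 hβmem) i).1
    set κ : ℕ → ℕ := fun q => σ0 (σ1 (σ2 q)) with hκ_def
    have hκmono : StrictMono κ := hσ0mono.comp (hσ1mono.comp hσ2mono)
    have hκtop : Tendsto κ atTop atTop := hκmono.tendsto_atTop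
    have htκ : Tendsto (fun q => t (κ q)) atTop atTop :=
      htσ0.comp (hσ1mono.comp hσ2mono).tendsto_atTop
    have htκpos : ∀ q, 0 < t (κ q) := fun q => htpos (σ1 (σ2 q))
    have hβlim : ∀ i, Tendsto (fun q => e (σ2 q) i) atTop (𝓝 (β i)) :=
      fun i => (tendsto_pi_nhds.1 hσ2tend) i
    -- sum of β over A equals 1
    have hesum : ∀ q, ∑ i ∈ A, e (σ2 q) i = 1 := by
      intro q
      rw [he_def]
      simp only
      rw [← Finset.sum_div]
      exact div_self (htκpos q).ne'
    have hβsum : ∑ i ∈ A, β i = 1 := by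
      have h1 : Tendsto (fun q => ∑ i ∈ A, e (σ2 q) i) atTop (𝓝 (∑ i ∈ A, β i)) :=
        tendsto_finset_sum _ fun i _ => hβlim i
      have h2 : Tendsto (fun q => ∑ i ∈ A, e (σ2 q) i) atTop (𝓝 1) := by
        simp only [hesum]; exact tendsto_const_nhds
      exact tendsto_nhds_unique h1 h2
    -- β vanishes off J0
    have hβJ0 : ∀ i, i ∉ J0 → β i = 0 := by
      intro i hi
      have h1 : ∀ q, e (σ2 q) i = 0 := by
        intro q
        rw [he_def]
        simp only
        rw [hdz _ i (by rw [hJconst (σ2 q)]; exact hi), zero_div]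
      have h2 : Tendsto (fun q => e (σ2 q) i) atTop (𝓝 0) := by
        simp only [h1]; exact tendsto_const_nhds
      exact tendsto_nhds_unique (hβlim i) h2
    have hJ0A : J0 ⊆ A := by
      have := hJsub (σ0 (σ1 0))
      rwa [hJconst 0] at this
    -- limit equation
    have hveq : ∀ q, ∑ i ∈ A, e (σ2 q) i • W i (y (κ q))
        = (t (κ q))⁻¹ • ((G (κ q) + ∑ i ∈ A, d (κ q) i • W i (y (κ q))) - G (κ q)) := by
      intro q
      rw [add_sub_cancel_left, Finset.smul_sum]
      refine Finset.sum_congr rfl fun i _ => ?_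
      rw [he_def]
      simp only
      rw [smul_smul, div_eq_inv_mul]
    have hlhs : Tendsto (fun q => ∑ i ∈ A, e (σ2 q) i • W i (y (κ q))) atTop
        (𝓝 (∑ i ∈ A, β i • W i xbar)) := by
      refine tendsto_finset_sum _ fun i _ => Tendsto.smul (hβlim i) ?_
      exact ((hWcont i).tendsto xbar).comp (hy.comp hκtop)
    have hrhs : Tendsto (fun q => (t (κ q))⁻¹
        • ((G (κ q) + ∑ i ∈ A, d (κ q) i • W i (y (κ q))) - G (κ q))) atTop (𝓝 0) := by
      have h1 : Tendsto (fun q => (t (κ q))⁻¹) atTop (𝓝 0) :=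
        tendsto_inv_atTop_zero.comp htκ
      have h2 : Tendsto (fun q => (G (κ q) + ∑ i ∈ A, d (κ q) i • W i (y (κ q))) - G (κ q))
          atTop (𝓝 (0 - Ginf)) := (hS'.comp hκtop).sub (hG.comp hκtop)
      have := h1.smul h2
      simpa using this
    have hlim0 : ∑ i ∈ A, β i • W i xbar = 0 := by
      refine tendsto_nhds_unique ?_ hrhs
      have : (fun q => ∑ i ∈ A, e (σ2 q) i • W i (y (κ q)))
          = fun q => (t (κ q))⁻¹ • ((G (κ q) + ∑ i ∈ A, d (κ q) i • W i (y (κ q))) - G (κ q)) :=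
        funext hveq
      rw [← this]
      exact hlhs
    -- positive linear dependence at xbar
    obtain ⟨i0, hi0A, hi0ne⟩ : ∃ i ∈ A, β i ≠ 0 := by
      apply Finset.exists_ne_zero_of_sum_ne_zero
      rw [hβsum]; exact one_ne_zero
    have hi0J0 : i0 ∈ J0 := by
      by_contra hcon
      exact hi0ne (hβJ0 i0 hcon)
    have hPLD : PosLinDep J0 (fun i => W i xbar) := by
      refine ⟨β, hβ0, ⟨i0, hi0J0, hi0ne⟩, ?_⟩
      rw [Finset.sum_subset hJ0A fun i _ hi => by rw [hβJ0 i hi, zero_smul]]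
      exact hlim0
    obtain ⟨U, hU, hlin⟩ := hCPLD J0 (fun j hj => hA j (hJ0A hj)) hPLD
    have hyκ : Tendsto (fun q => y (κ q)) atTop (𝓝 xbar) := hy.comp hκtop
    have hev : ∀ᶠ q in atTop, y (κ q) ∈ U := hyκ hU
    obtain ⟨q, hq⟩ := hev.exists
    have hne : ¬ LinDep (J (κ q)) (fun i => W i (y (κ q))) := hindep (κ q)
    rw [hJconst (σ2 q)] at hne
    exact hne (hlin _ hq)
lemma abs_le_sqrt_sum {κ : Type*} [Fintype κ] (q : κ → ℝ) (j : κ) :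
    |q j| ≤ Real.sqrt (∑ i, q i ^ 2) := by
  rw [← Real.sqrt_sq_eq_abs]
  exact Real.sqrt_le_sqrt (Finset.single_le_sum (fun i _ => sq_nonneg (q i))
    (Finset.mem_univ j))

/-- If `min (aa l) (bb l) → 0` and `aa l → A0 > 0`, then `bb l → 0`. -/
lemma min_tendsto_aux {aa bb : ℕ → ℝ} {A0 : ℝ} (hA0 : 0 < A0)
    (ha : Tendsto aa atTop (𝓝 A0))
    (hmin : Tendsto (fun l => min (aa l) (bb l)) atTop (𝓝 0)) :
    Tendsto bb atTop (𝓝 0) := by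
  refine hmin.congr' ?_
  have habs : Tendsto (fun l => |min (aa l) (bb l)|) atTop (𝓝 0) := by
    simpa using hmin.abs
  filter_upwards [ha.eventually (eventually_gt_nhds (half_lt_self hA0)),
    habs.eventually (eventually_lt_nhds (half_pos hA0))] with l h1 h2
  rcases le_or_gt (aa l) (bb l) with hc | hc
  · exfalso
    rw [min_eq_left hc] at h2
    rw [abs_of_pos (by linarith)] at h2
    linarith
  · exact min_eq_right hc.le
set_option maxHeartbeats 4000000 in
set_option maxHeartbeats 4000000 in
/-- **Theorem 5.3.** For the variational-equilibrium augmented Lagrangian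
method applied to a jointly-convex GNEP with feasible points, if the concatenated map
`(g, h)` satisfies the classical CPLD at a limit point `xbar`, then `xbar` is feasible and
solves the GNEP. -/
theorem stmt18 {N : ℕ} {n : Fin N → ℕ} {m p : ℕ}
    (θ : Fin N → Strat n → ℝ)
    (g : Fin m → Strat n → ℝ)
    (h : Fin p → Strat n → ℝ)
    (hθ : ∀ ν, ContDiff ℝ 1 (θ ν))
    (hgC1 : ∀ i, ContDiff ℝ 1 (g i))
    (hgconv : ∀ i, ConvexOn ℝ Set.univ (g i))
    (hhC1 : ∀ j, ContDiff ℝ 1 (h j))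
    (hhconv : ∀ j, ConvexOn ℝ Set.univ (h j))
    (x : ℕ → Strat n)
    (lam : ℕ → Fin m → ℝ)
    (mu : ℕ → Fin p → ℝ)
    (u : ℕ → Fin m → ℝ)
    (rho : ℕ → ℝ)
    (umax τ γ : ℝ)
    (humax : 0 ≤ umax)
    (hτ : τ ∈ Set.Ioo (0:ℝ) 1)
    (hγ : 1 < γ)
    (hrho0 : 0 < rho 0)
    (hu0 : ∀ i, u 0 i ∈ Set.Icc 0 umax)
    (hlam : ∀ k i, lam (k+1) i = max (u k i + rho k * g i (x (k+1))) 0)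
    (hu : ∀ k i, u (k+1) i = min (lam (k+1) i) umax)
    (hrho : ∀ k,
      (Real.sqrt (∑ i, (min (-(g i (x (k+1)))) (lam (k+1) i)) ^ 2) ≤
          τ * Real.sqrt (∑ i, (min (-(g i (x k))) (lam k i)) ^ 2) →
        rho (k+1) = rho k) ∧
      (¬ (Real.sqrt (∑ i, (min (-(g i (x (k+1)))) (lam (k+1) i)) ^ 2) ≤
          τ * Real.sqrt (∑ i, (min (-(g i (x k))) (lam k i)) ^ 2)) →
        rho (k+1) = γ * rho k))
    (eps eps' : ℕ → ℝ)
    (heps0 : ∀ k, 0 ≤ eps k)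
    (heps'0 : ∀ k, 0 ≤ eps' k)
    (heps' : Tendsto eps' atTop (𝓝 0))
    (hA1 : ∀ k ν, ‖pgrad ν (θ ν) (x (k+1))
        + ∑ i, max (u k i + rho k * g i (x (k+1))) 0 • pgrad ν (g i) (x (k+1))
        + ∑ j, mu (k+1) j • pgrad ν (h j) (x (k+1))‖ ≤ eps k)
    (hA2 : ∀ k, Real.sqrt (∑ j, (min (-(h j (x (k+1)))) (mu (k+1) j)) ^ 2) ≤ eps' k)
    (heps : Tendsto eps atTop (𝓝 0))
    (hθconv : ∀ (ν : Fin N) (y : Strat n),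
      ConvexOn ℝ Set.univ (fun z => θ ν (Function.update y ν z)))
    (hfeasible : ∃ z : Strat n, (∀ i, g i z ≤ 0) ∧ ∀ j, h j z ≤ 0)
    (xbar : Strat n)
    (hclus : MapClusterPt xbar atTop x)
    (hCPLD : ∀ I : Finset (Fin m ⊕ Fin p),
      (∀ j ∈ I, Sum.elim g h j xbar = 0) →
      PosLinDep I (fun j => (fun ν => pgrad ν (Sum.elim g h j) xbar : Strat n)) →
      ∃ U ∈ 𝓝 xbar, ∀ y ∈ U,
        LinDep I (fun j => (fun ν => pgrad ν (Sum.elim g h j) y : Strat n))) :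
    ((∀ i, g i xbar ≤ 0) ∧ (∀ j, h j xbar ≤ 0)) ∧
    ∀ (ν : Fin N) (z : EuclideanSpace ℝ (Fin (n ν))),
      (∀ i, g i (Function.update xbar ν z) ≤ 0) →
      (∀ j, h j (Function.update xbar ν z) ≤ 0) →
      θ ν xbar ≤ θ ν (Function.update xbar ν z) := by  classical
  -- differentiability facts
  have hθdiff : ∀ ν (w : Strat n), DifferentiableAt ℝ (θ ν) w :=
    fun ν w => ((hθ ν).differentiable one_ne_zero) w
  have hgdiff : ∀ i (w : Strat n), DifferentiableAt ℝ (g i) w :=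
    fun i w => ((hgC1 i).differentiable one_ne_zero) w
  have hhdiff : ∀ j (w : Strat n), DifferentiableAt ℝ (h j) w :=
    fun j w => ((hhC1 j).differentiable one_ne_zero) w
  -- basic algorithmic facts
  have hρpos : ∀ k, 0 < rho k := by
    intro k
    induction k with
    | zero => exact hrho0
    | succ k ih =>
      by_cases htest : Real.sqrt (∑ i, (min (-(g i (x (k+1)))) (lam (k+1) i)) ^ 2) ≤
          τ * Real.sqrt (∑ i, (min (-(g i (x k))) (lam k i)) ^ 2)
      · rw [(hrho k).1 htest]; exact ih
      · rw [(hrho k).2 htest]; exact mul_pos (lt_trans one_pos hγ) ih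
  have hρmono : Monotone rho := by
    apply monotone_nat_of_le_succ
    intro k
    by_cases htest : Real.sqrt (∑ i, (min (-(g i (x (k+1)))) (lam (k+1) i)) ^ 2) ≤
        τ * Real.sqrt (∑ i, (min (-(g i (x k))) (lam k i)) ^ 2)
    · rw [(hrho k).1 htest]
    · rw [(hrho k).2 htest]
      nlinarith [hρpos k]
  have humem : ∀ k i, 0 ≤ u k i ∧ u k i ≤ umax := by
    intro k
    induction k with
    | zero => exact fun i => ⟨(hu0 i).1, (hu0 i).2⟩
    | succ k _ =>
      intro i
      rw [hu k i]
      refine ⟨le_min ?_ humax, min_le_right _ _⟩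
      rw [hlam k i]; exact le_max_right _ _
  have hlamnn : ∀ k i, 0 ≤ lam (k+1) i := fun k i => by
    rw [hlam k i]; exact le_max_right _ _
  -- master subsequence
  obtain ⟨ψ, hψmono, hψtend⟩ := TopologicalSpace.FirstCountableTopology.tendsto_subseq hclus
  set κ : ℕ → ℕ := fun l => ψ (l+1) - 1 with hκdef
  have hκ1 : ∀ l, κ l + 1 = ψ (l+1) := by
    intro l
    have := hψmono (show 0 < l + 1 by omega)
    simp only [hκdef]
    omega
  have hκmono : StrictMono κ := by
    intro a b hab
    have h1 := hψmono (show a+1 < b+1 by omega)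
    have h2 := hκ1 a
    have h3 := hκ1 b
    omega
  have hκtop : Tendsto κ atTop atTop := hκmono.tendsto_atTop
  set y : ℕ → Strat n := fun l => x (κ l + 1) with hydef
  have hytend : Tendsto y atTop (𝓝 xbar) := by
    have hyeq : y = (x ∘ ψ) ∘ (fun l => l + 1) := funext fun l => by
      simp only [hydef, Function.comp_apply, hκ1 l]
    rw [hyeq]
    exact hψtend.comp (tendsto_add_atTop_nat 1)
  have hepsκ : Tendsto (fun l => eps (κ l)) atTop (𝓝 0) := heps.comp hκtop
  have heps'κ : Tendsto (fun l => eps' (κ l)) atTop (𝓝 0) := heps'.comp hκtop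
  -- continuity along the subsequence
  have hg_yl : ∀ i, Tendsto (fun l => g i (y l)) atTop (𝓝 (g i xbar)) :=
    fun i => ((hgC1 i).continuous.tendsto xbar).comp hytend
  have hh_yl : ∀ j, Tendsto (fun l => h j (y l)) atTop (𝓝 (h j xbar)) :=
    fun j => ((hhC1 j).continuous.tendsto xbar).comp hytend
  -- residual mins for h tend to zero
  have hrmin : ∀ j, Tendsto (fun l => min (-(h j (y l))) (mu (κ l + 1) j)) atTop (𝓝 0) := by
    intro j
    apply squeeze_zero_norm (fun l => ?_) heps'κ
    rw [Real.norm_eq_abs]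
    exact le_trans (abs_le_sqrt_sum (fun j' => min (-(h j' (x (κ l + 1)))) (mu (κ l + 1) j')) j)
      (hA2 (κ l))
  -- feasibility for h
  have hfeash : ∀ j, h j xbar ≤ 0 := by
    intro j
    have h1 : ∀ l, min (-(h j (y l))) (mu (κ l + 1) j) ≤ -(h j (y l)) :=
      fun l => min_le_left _ _
    have h2 := le_of_tendsto_of_tendsto' (hrmin j) ((hh_yl j).neg) h1
    linarith
  -- multipliers of inactive h-constraints tend to zero
  have hmu0 : ∀ j, h j xbar < 0 → Tendsto (fun l => mu (κ l + 1) j) atTop (𝓝 0) := by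
    intro j hneg
    exact min_tendsto_aux (by linarith : (0:ℝ) < -(h j xbar)) (hh_yl j).neg (hrmin j)
  -- positive-part error bounds for mu
  have hmuhat : ∀ l j, 0 ≤ max (mu (κ l + 1) j) 0 - mu (κ l + 1) j ∧
      max (mu (κ l + 1) j) 0 - mu (κ l + 1) j ≤ eps' (κ l) := by
    intro l j
    refine ⟨sub_nonneg.2 (le_max_left _ _), ?_⟩
    rcases le_or_gt 0 (mu (κ l + 1) j) with hm | hm
    · rw [max_eq_left hm]
      simpa using heps'0 (κ l)
    · rw [max_eq_right hm.le]
      have h1 : |min (-(h j (x (κ l + 1)))) (mu (κ l + 1) j)| ≤ eps' (κ l) :=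
        le_trans (abs_le_sqrt_sum (fun j' => min (-(h j' (x (κ l + 1)))) (mu (κ l + 1) j')) j)
          (hA2 (κ l))
      have h2 : min (-(h j (x (κ l + 1)))) (mu (κ l + 1) j) ≤ mu (κ l + 1) j :=
        min_le_right _ _
      rw [abs_of_neg (lt_of_le_of_lt h2 hm)] at h1
      linarith
  -- the AKKT residual vector
  set T : ℕ → Strat n := fun l => fun ν => pgrad ν (θ ν) (y l)
      + ∑ i, lam (κ l + 1) i • pgrad ν (g i) (y l)
      + ∑ j, mu (κ l + 1) j • pgrad ν (h j) (y l) with hT_def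
  have hTnorm : ∀ l ν, ‖T l ν‖ ≤ eps (κ l) := by
    intro l ν
    have h0 := hA1 (κ l) ν
    have hco : ∀ i, max (u (κ l) i + rho (κ l) * g i (x (κ l + 1))) 0 = lam (κ l + 1) i :=
      fun i => (hlam (κ l) i).symm
    simp only [hco] at h0
    exact h0
  have hTtend : Tendsto T atTop (𝓝 0) := by
    rw [tendsto_pi_nhds]
    intro ν
    have h1 : Tendsto (fun l => T l ν) atTop (𝓝 0) :=
      squeeze_zero_norm (fun l => hTnorm l ν) hepsκ
    simpa using h1
  
  -- It suffices to establish feasibility of g and vanishing of inactive multipliers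
  suffices hKEY : (∀ i, g i xbar ≤ 0) ∧
      (∀ i : Fin m, g i xbar < 0 → Tendsto (fun l => lam (κ l + 1) i) atTop (𝓝 0)) by
    obtain ⟨hfeasg, hlam0⟩ := hKEY
    set c : (Fin m ⊕ Fin p) → Strat n → ℝ := Sum.elim g h with hc_def
    have hcC1 : ∀ s, ContDiff ℝ 1 (c s) := by
      intro s; cases s with
      | inl i => exact hgC1 i
      | inr j => exact hhC1 j
    have hcconv : ∀ s, ConvexOn ℝ Set.univ (c s) := by
      intro s; cases s with
      | inl i => exact hgconv i
      | inr j => exact hhconv j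
    have hcdiff : ∀ s (w : Strat n), DifferentiableAt ℝ (c s) w :=
      fun s w => ((hcC1 s).differentiable one_ne_zero) w
    set Pg : Finset (Fin m) := Finset.univ.filter (fun i => g i xbar = 0) with hPg_def
    set Ph : Finset (Fin p) := Finset.univ.filter (fun j => h j xbar = 0) with hPh_def
    set A : Finset (Fin m ⊕ Fin p) := Pg.image Sum.inl ∪ Ph.image Sum.inr with hA_def
    have hAact : ∀ s ∈ A, c s xbar = 0 := by
      intro s hs
      rcases Finset.mem_union.1 hs with hs | hs
      · obtain ⟨i, hi, rfl⟩ := Finset.mem_image.1 hs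
        exact (Finset.mem_filter.1 hi).2
      · obtain ⟨j, hj, rfl⟩ := Finset.mem_image.1 hs
        exact (Finset.mem_filter.1 hj).2
    set b : ℕ → (Fin m ⊕ Fin p) → ℝ :=
      fun l => Sum.elim (fun i => lam (κ l + 1) i) (fun j => max (mu (κ l + 1) j) 0) with hb_def
    have hbnn : ∀ l s, 0 ≤ b l s := by
      intro l s; cases s with
      | inl i => exact hlamnn (κ l) i
      | inr j => exact le_max_right _ _
    set G : ℕ → Strat n := fun l =>
      T l - ∑ s ∈ A, b l s • (fun ν => pgrad ν (c s) (y l) : Strat n) with hG_def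
    have hdisj : Disjoint (Pg.image Sum.inl) (Ph.image Sum.inr) := by
      rw [Finset.disjoint_left]
      rintro s hs1 hs2
      obtain ⟨i, _, rfl⟩ := Finset.mem_image.1 hs1
      obtain ⟨j, _, hji⟩ := Finset.mem_image.1 hs2
      exact absurd hji (by simp)
    have hGν : ∀ l ν, G l ν = pgrad ν (θ ν) (y l)
        + ∑ i ∈ Finset.univ.filter (fun i => ¬ g i xbar = 0),
            lam (κ l + 1) i • pgrad ν (g i) (y l)
        + ∑ j ∈ Finset.univ.filter (fun j => ¬ h j xbar = 0),
            mu (κ l + 1) j • pgrad ν (h j) (y l)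
        + ∑ j ∈ Ph, (mu (κ l + 1) j - max (mu (κ l + 1) j) 0) • pgrad ν (h j) (y l) := by
      intro l ν
      have e1 : G l ν = T l ν - ∑ s ∈ A, b l s • pgrad ν (c s) (y l) := by
        rw [hG_def]
        simp [Finset.sum_apply]
      rw [e1, hA_def, Finset.sum_union hdisj,
        Finset.sum_image (by intro a _ a' _ hab; exact Sum.inl_injective hab),
        Finset.sum_image (by intro a _ a' _ hab; exact Sum.inr_injective hab)]
      have e2 : T l ν = pgrad ν (θ ν) (y l)
          + ∑ i, lam (κ l + 1) i • pgrad ν (g i) (y l)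
          + ∑ j, mu (κ l + 1) j • pgrad ν (h j) (y l) := by rw [hT_def]
      rw [e2,
        ← Finset.sum_filter_add_sum_filter_not Finset.univ (fun i => g i xbar = 0)
          (fun i => lam (κ l + 1) i • pgrad ν (g i) (y l)),
        ← Finset.sum_filter_add_sum_filter_not Finset.univ (fun j => h j xbar = 0)
          (fun j => mu (κ l + 1) j • pgrad ν (h j) (y l))]
      simp only [sub_smul, Finset.sum_sub_distrib, hb_def, Sum.elim_inl, Sum.elim_inr,
        hc_def, hPg_def, hPh_def]
      abel
    have hStend : Tendsto (fun l =>
        G l + ∑ s ∈ A, b l s • (fun ν => pgrad ν (c s) (y l) : Strat n)) atTop (𝓝 0) := by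
      have hfun : (fun l =>
          G l + ∑ s ∈ A, b l s • (fun ν => pgrad ν (c s) (y l) : Strat n)) = T := by
        funext l; rw [hG_def]; exact sub_add_cancel _ _
      rw [hfun]; exact hTtend
    have hGtend : Tendsto G atTop (𝓝 (fun ν => pgrad ν (θ ν) xbar : Strat n)) := by
      rw [tendsto_pi_nhds]
      intro ν
      have hGν' : (fun l => G l ν) = fun l => pgrad ν (θ ν) (y l)
          + ∑ i ∈ Finset.univ.filter (fun i => ¬ g i xbar = 0),
              lam (κ l + 1) i • pgrad ν (g i) (y l)
          + ∑ j ∈ Finset.univ.filter (fun j => ¬ h j xbar = 0),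
              mu (κ l + 1) j • pgrad ν (h j) (y l)
          + ∑ j ∈ Ph, (mu (κ l + 1) j - max (mu (κ l + 1) j) 0) • pgrad ν (h j) (y l) :=
        funext fun l => hGν l ν
      have hmain : Tendsto (fun l => G l ν) atTop (𝓝 (pgrad ν (θ ν) xbar
          + ∑ i ∈ Finset.univ.filter (fun i => ¬ g i xbar = 0), (0:ℝ) • pgrad ν (g i) xbar
          + ∑ j ∈ Finset.univ.filter (fun j => ¬ h j xbar = 0), (0:ℝ) • pgrad ν (h j) xbar
          + ∑ j ∈ Ph, (0:ℝ) • pgrad ν (h j) xbar)) := by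
        rw [hGν']
        refine Tendsto.add (Tendsto.add (Tendsto.add ?_ ?_) ?_) ?_
        · exact ((pgrad_continuous (hθ ν) ν).tendsto xbar).comp hytend
        · refine tendsto_finset_sum _ fun i hi => Tendsto.smul ?_
            (((pgrad_continuous (hgC1 i) ν).tendsto xbar).comp hytend)
          have hne : ¬ g i xbar = 0 := (Finset.mem_filter.1 hi).2
          exact hlam0 i (lt_of_le_of_ne (hfeasg i) hne)
        · refine tendsto_finset_sum _ fun j hj => Tendsto.smul ?_
            (((pgrad_continuous (hhC1 j) ν).tendsto xbar).comp hytend)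
          have hne : ¬ h j xbar = 0 := (Finset.mem_filter.1 hj).2
          exact hmu0 j (lt_of_le_of_ne (hfeash j) hne)
        · refine tendsto_finset_sum _ fun j hj => Tendsto.smul ?_
            (((pgrad_continuous (hhC1 j) ν).tendsto xbar).comp hytend)
          apply squeeze_zero_norm (fun l => ?_) heps'κ
          rw [Real.norm_eq_abs, abs_sub_comm, abs_of_nonneg (hmuhat l j).1]
          exact (hmuhat l j).2
      simpa using hmain
    obtain ⟨β, hβ0, heqK⟩ :=
      akkt_to_kkt c hcC1 xbar hCPLD A hAact y hytend b hbnn G _ hGtend hStend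
    refine ⟨⟨hfeasg, hfeash⟩, ?_⟩
    intro ν z hgz hhz
    have hblock : pgrad ν (θ ν) xbar + ∑ s ∈ A, β s • pgrad ν (c s) xbar = 0 := by
      have h0 := congrFun heqK ν
      simpa [Finset.sum_apply] using h0
    have hθineq := player_ineq (hθconv ν xbar) (hθdiff ν xbar) z
    have hterm : ∀ s ∈ A, β s * ⟪pgrad ν (c s) xbar, z - xbar ν⟫ ≤ 0 := by
      intro s hs
      have hcs := player_ineq (convexOn_update (hcconv s) xbar ν) (hcdiff s xbar) z
      have hact := hAact s hs
      have hupd : c s (Function.update xbar ν z) ≤ 0 := by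
        cases s with
        | inl i => exact hgz i
        | inr j => exact hhz j
      have hin : ⟪pgrad ν (c s) xbar, z - xbar ν⟫ ≤ 0 := by
        rw [hact] at hcs
        linarith
      exact mul_nonpos_of_nonneg_of_nonpos (hβ0 s) hin
    have hinner0 : 0 ≤ ⟪pgrad ν (θ ν) xbar, z - xbar ν⟫ := by
      have h2 : pgrad ν (θ ν) xbar = - ∑ s ∈ A, β s • pgrad ν (c s) xbar :=
        eq_neg_of_add_eq_zero_left hblock
      have h1 : ⟪pgrad ν (θ ν) xbar, z - xbar ν⟫
          = - ∑ s ∈ A, β s * ⟪pgrad ν (c s) xbar, z - xbar ν⟫ := by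
        rw [h2, inner_neg_left, sum_inner]
        congr 1
        exact Finset.sum_congr rfl fun s _ => real_inner_smul_left _ _ _
      rw [h1]
      have h3 : ∑ s ∈ A, β s * ⟪pgrad ν (c s) xbar, z - xbar ν⟫ ≤ 0 :=
        Finset.sum_nonpos hterm
      linarith
    linarith [hθineq, hinner0]
  
  by_cases hbdd : ∃ C, ∀ k, rho k ≤ C
  · -- bounded penalty parameters
    obtain ⟨C, hC⟩ := hbdd
    have hBdd : BddAbove (Set.range rho) := ⟨C, by rintro r ⟨k, rfl⟩; exact hC k⟩
    set L : ℝ := ⨆ k, rho k with hL_def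
    have hLtend : Tendsto rho atTop (𝓝 L) := tendsto_atTop_ciSup hρmono hBdd
    have hLpos : 0 < L := lt_of_lt_of_le hrho0 (le_ciSup hBdd 0)
    have hev : ∀ᶠ k in atTop, rho (k+1) < γ * rho k := by
      have h1 : Tendsto (fun k => γ * rho k - rho (k+1)) atTop (𝓝 (γ * L - L)) :=
        (tendsto_const_nhds.mul hLtend).sub (hLtend.comp (tendsto_add_atTop_nat 1))
      have h2 : (0:ℝ) < γ * L - L := by nlinarith
      have h3 := h1.eventually (eventually_gt_nhds h2)
      filter_upwards [h3] with k hk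
      linarith
    have hevtest : ∀ᶠ k in atTop,
        Real.sqrt (∑ i, (min (-(g i (x (k+1)))) (lam (k+1) i)) ^ 2) ≤
          τ * Real.sqrt (∑ i, (min (-(g i (x k))) (lam k i)) ^ 2) := by
      filter_upwards [hev] with k hk
      by_contra hcon
      rw [(hrho k).2 hcon] at hk
      exact lt_irrefl _ hk
    set V : ℕ → ℝ := fun k => Real.sqrt (∑ i, (min (-(g i (x k))) (lam k i)) ^ 2) with hV_def
    have hVnn : ∀ k, 0 ≤ V k := fun k => Real.sqrt_nonneg _
    have hevtest' : ∀ᶠ k in atTop, V (k+1) ≤ τ * V k := hevtest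
    obtain ⟨K, hK⟩ := eventually_atTop.1 hevtest'
    have hVgeom : ∀ jj, V (K + jj) ≤ τ ^ jj * V K := by
      intro jj
      induction jj with
      | zero => simp
      | succ jj ih =>
        have h1 : V (K + jj + 1) ≤ τ * V (K + jj) := hK (K + jj) (Nat.le_add_right _ _)
        calc V (K + (jj+1)) = V (K + jj + 1) := by ring_nf
          _ ≤ τ * V (K + jj) := h1
          _ ≤ τ * (τ ^ jj * V K) := mul_le_mul_of_nonneg_left ih hτ.1.le
          _ = τ ^ (jj+1) * V K := by ring
    have hVtend : Tendsto V atTop (𝓝 0) := by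
      rw [← tendsto_add_atTop_iff_nat K]
      have hb : Tendsto (fun jj => τ ^ jj * V K) atTop (𝓝 0) := by
        simpa using (tendsto_pow_atTop_nhds_zero_of_lt_one hτ.1.le hτ.2).mul_const (V K)
      exact squeeze_zero (fun jj => hVnn _) (fun jj => by rw [add_comm]; exact hVgeom jj) hb
    have hVκ : Tendsto (fun l => V (κ l + 1)) atTop (𝓝 0) :=
      hVtend.comp ((tendsto_add_atTop_nat 1).comp hκtop)
    have hrg : ∀ i, Tendsto (fun l => min (-(g i (y l))) (lam (κ l + 1) i)) atTop (𝓝 0) := by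
      intro i
      apply squeeze_zero_norm (fun l => ?_) hVκ
      rw [Real.norm_eq_abs, hV_def]
      exact abs_le_sqrt_sum (fun i' => min (-(g i' (x (κ l + 1)))) (lam (κ l + 1) i')) i
    have hfeasg : ∀ i, g i xbar ≤ 0 := by
      intro i
      have h1 : ∀ l, min (-(g i (y l))) (lam (κ l + 1) i) ≤ -(g i (y l)) :=
        fun l => min_le_left _ _
      have h2 := le_of_tendsto_of_tendsto' (hrg i) ((hg_yl i).neg) h1
      linarith
    refine ⟨hfeasg, fun i hineg => ?_⟩
    exact min_tendsto_aux (by linarith : (0:ℝ) < -(g i xbar)) (hg_yl i).neg (hrg i)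
  · -- unbounded case
    push_neg at hbdd
    have hρtop : Tendsto rho atTop atTop := by
      apply tendsto_atTop_atTop_of_monotone' hρmono
      rintro ⟨C, hC⟩
      obtain ⟨k, hk⟩ := hbdd C
      exact absurd (hC ⟨k, rfl⟩) (not_le.2 hk)
    have hρκtop : Tendsto (fun l => rho (κ l)) atTop atTop := hρtop.comp hκtop
    have hρinv : Tendsto (fun l => (rho (κ l))⁻¹) atTop (𝓝 0) :=
      tendsto_inv_atTop_zero.comp hρκtop
    have hρκpos : ∀ l, 0 < rho (κ l) := fun l => hρpos (κ l)
    -- inactive g-multipliers vanish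
    have hlam0 : ∀ i : Fin m, g i xbar < 0 →
        Tendsto (fun l => lam (κ l + 1) i) atTop (𝓝 0) := by
      intro i hineg
      have hev0 : ∀ᶠ l in atTop, lam (κ l + 1) i = 0 := by
        have hev1 : ∀ᶠ l in atTop, g i (y l) < g i xbar / 2 :=
          (hg_yl i).eventually (eventually_lt_nhds (by linarith))
        have hev2 : ∀ᶠ l in atTop, 2 * umax / (-(g i xbar)) ≤ rho (κ l) :=
          hρκtop.eventually (eventually_ge_atTop _)
        filter_upwards [hev1, hev2] with l h1 h2
        rw [hlam (κ l) i, max_eq_right]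
        have hu2 := (humem (κ l) i).2
        have hρl := hρκpos l
        have h1' : g i (x (κ l + 1)) < g i xbar / 2 := h1
        have hR : 0 < -(g i xbar) := by linarith
        have hgne : g i xbar ≠ 0 := ne_of_lt hineg
        have h5 : (2 * umax / (-(g i xbar))) * (-(g i xbar) / 2) = umax := by
          field_simp
        have h6 : (2 * umax / (-(g i xbar))) * (-(g i xbar) / 2)
            ≤ rho (κ l) * (-(g i xbar) / 2) :=
          mul_le_mul_of_nonneg_right h2 (by linarith)
        have h7 : rho (κ l) * (-(g i xbar) / 2) ≤ rho (κ l) * (-(g i (x (κ l + 1)))) :=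
          mul_le_mul_of_nonneg_left (by linarith) hρl.le
        have h8 : rho (κ l) * g i (x (κ l + 1))
            = -(rho (κ l) * (-(g i (x (κ l + 1))))) := by ring
        linarith [h5, h6, h7, hu2, h8]
      exact Tendsto.congr' (by filter_upwards [hev0] with l hl; exact hl.symm)
        tendsto_const_nhds
    -- feasibility of g via the AKKT machinery applied to the scaled residual
    set Ph : Finset (Fin p) := Finset.univ.filter (fun j => h j xbar = 0) with hPh_def
    set c : (Fin m ⊕ Fin p) → Strat n → ℝ := Sum.elim g h with hc_def
    have hcC1 : ∀ s, ContDiff ℝ 1 (c s) := by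
      intro s; cases s with
      | inl i => exact hgC1 i
      | inr j => exact hhC1 j
    set A : Finset (Fin m ⊕ Fin p) := Ph.image Sum.inr with hA_def
    have hAact : ∀ s ∈ A, c s xbar = 0 := by
      intro s hs
      obtain ⟨j, hj, rfl⟩ := Finset.mem_image.1 hs
      exact (Finset.mem_filter.1 hj).2
    set b : ℕ → (Fin m ⊕ Fin p) → ℝ := fun l =>
      Sum.elim (fun _ => (0:ℝ)) (fun j => max (mu (κ l + 1) j) 0 / rho (κ l)) with hb_def
    have hbnn : ∀ l s, 0 ≤ b l s := by
      intro l s; cases s with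
      | inl i => exact le_rfl
      | inr j => exact div_nonneg (le_max_right _ _) (hρκpos l).le
    set S : ℕ → Strat n := fun l => (rho (κ l))⁻¹ • T l with hS_def
    have hStend0 : Tendsto S atTop (𝓝 0) := by
      have := hρinv.smul hTtend
      simpa using this
    set G : ℕ → Strat n := fun l =>
      S l - ∑ s ∈ A, b l s • (fun ν => pgrad ν (c s) (y l) : Strat n) with hG_def
    have hStend : Tendsto (fun l =>
        G l + ∑ s ∈ A, b l s • (fun ν => pgrad ν (c s) (y l) : Strat n)) atTop (𝓝 0) := by
      have hfun : (fun l =>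
          G l + ∑ s ∈ A, b l s • (fun ν => pgrad ν (c s) (y l) : Strat n)) = S := by
        funext l; rw [hG_def]; exact sub_add_cancel _ _
      rw [hfun]; exact hStend0
    have hGν : ∀ l ν, G l ν = (rho (κ l))⁻¹ • pgrad ν (θ ν) (y l)
        + ∑ i, ((rho (κ l))⁻¹ * lam (κ l + 1) i) • pgrad ν (g i) (y l)
        + ∑ j ∈ Finset.univ.filter (fun j => ¬ h j xbar = 0),
            ((rho (κ l))⁻¹ * mu (κ l + 1) j) • pgrad ν (h j) (y l)
        + ∑ j ∈ Ph, ((rho (κ l))⁻¹ * mu (κ l + 1) j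
            - max (mu (κ l + 1) j) 0 / rho (κ l)) • pgrad ν (h j) (y l) := by
      intro l ν
      have e1 : G l ν = (rho (κ l))⁻¹ • T l ν - ∑ s ∈ A, b l s • pgrad ν (c s) (y l) := by
        rw [hG_def]
        simp [hS_def, Finset.sum_apply]
      rw [e1, hA_def,
        Finset.sum_image (by intro a _ a' _ hab; exact Sum.inr_injective hab)]
      have e2 : T l ν = pgrad ν (θ ν) (y l)
          + ∑ i, lam (κ l + 1) i • pgrad ν (g i) (y l)
          + ∑ j, mu (κ l + 1) j • pgrad ν (h j) (y l) := by rw [hT_def]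
      rw [e2,
        ← Finset.sum_filter_add_sum_filter_not Finset.univ (fun j => h j xbar = 0)
          (fun j => mu (κ l + 1) j • pgrad ν (h j) (y l))]
      simp only [smul_add, Finset.smul_sum, smul_smul, sub_smul, Finset.sum_sub_distrib,
        hb_def, Sum.elim_inr, hc_def, hPh_def]
      abel
    set Ginf : Strat n := (fun ν => ∑ i, max (g i xbar) 0 • pgrad ν (g i) xbar)
      with hGinf_def
    have hGtend : Tendsto G atTop (𝓝 Ginf) := by
      rw [tendsto_pi_nhds]
      intro ν
      have hGν' : (fun l => G l ν) = fun l => (rho (κ l))⁻¹ • pgrad ν (θ ν) (y l)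
          + ∑ i, ((rho (κ l))⁻¹ * lam (κ l + 1) i) • pgrad ν (g i) (y l)
          + ∑ j ∈ Finset.univ.filter (fun j => ¬ h j xbar = 0),
              ((rho (κ l))⁻¹ * mu (κ l + 1) j) • pgrad ν (h j) (y l)
          + ∑ j ∈ Ph, ((rho (κ l))⁻¹ * mu (κ l + 1) j
              - max (mu (κ l + 1) j) 0 / rho (κ l)) • pgrad ν (h j) (y l) :=
        funext fun l => hGν l ν
      have hmain : Tendsto (fun l => G l ν) atTop (𝓝 ((0:ℝ) • pgrad ν (θ ν) xbar
          + ∑ i, max (g i xbar) 0 • pgrad ν (g i) xbar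
          + ∑ j ∈ Finset.univ.filter (fun j => ¬ h j xbar = 0), (0:ℝ) • pgrad ν (h j) xbar
          + ∑ j ∈ Ph, (0:ℝ) • pgrad ν (h j) xbar)) := by
        rw [hGν']
        refine Tendsto.add (Tendsto.add (Tendsto.add ?_ ?_) ?_) ?_
        · exact hρinv.smul (((pgrad_continuous (hθ ν) ν).tendsto xbar).comp hytend)
        · refine tendsto_finset_sum _ fun i _ => Tendsto.smul ?_
            (((pgrad_continuous (hgC1 i) ν).tendsto xbar).comp hytend)
          have hcoef : ∀ l, (rho (κ l))⁻¹ * lam (κ l + 1) i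
              = max ((rho (κ l))⁻¹ * u (κ l) i + g i (x (κ l + 1))) 0 := by
            intro l
            rw [hlam (κ l) i, mul_max_of_nonneg _ _ (inv_nonneg.2 (hρκpos l).le),
              mul_zero, mul_add]
            congr 2
            rw [← mul_assoc, inv_mul_cancel₀ (hρκpos l).ne', one_mul]
          rw [show (fun l => (rho (κ l))⁻¹ * lam (κ l + 1) i)
              = fun l => max ((rho (κ l))⁻¹ * u (κ l) i + g i (x (κ l + 1))) 0
              from funext hcoef]
          have h1 : Tendsto (fun l => (rho (κ l))⁻¹ * u (κ l) i) atTop (𝓝 0) := by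
            apply squeeze_zero
              (fun l => mul_nonneg (inv_nonneg.2 (hρκpos l).le) (humem (κ l) i).1)
              (fun l => mul_le_mul_of_nonneg_left (humem (κ l) i).2
                (inv_nonneg.2 (hρκpos l).le))
            simpa using hρinv.mul_const umax
          have h2 := (h1.add (hg_yl i)).max (tendsto_const_nhds (x := (0:ℝ)))
          simpa using h2
        · refine tendsto_finset_sum _ fun j hj => Tendsto.smul ?_
            (((pgrad_continuous (hhC1 j) ν).tendsto xbar).comp hytend)
          have hne : ¬ h j xbar = 0 := by
            have := (Finset.mem_filter.1 hj).2
            simpa using this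
          have := hρinv.mul (hmu0 j (lt_of_le_of_ne (hfeash j) hne))
          simpa using this
        · refine tendsto_finset_sum _ fun j hj => Tendsto.smul ?_
            (((pgrad_continuous (hhC1 j) ν).tendsto xbar).comp hytend)
          apply squeeze_zero_norm (fun l => ?_) (by simpa using heps'κ.const_mul (rho 0)⁻¹)
          have hflip : (rho (κ l))⁻¹ * mu (κ l + 1) j - max (mu (κ l + 1) j) 0 / rho (κ l)
              = -((max (mu (κ l + 1) j) 0 - mu (κ l + 1) j) / rho (κ l)) := by
            field_simp
            ring
          rw [Real.norm_eq_abs, hflip, abs_neg,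
            abs_of_nonneg (div_nonneg (hmuhat l j).1 (hρκpos l).le)]
          have hd := div_le_div₀ (heps'0 (κ l)) (hmuhat l j).2 hrho0 (hρmono (Nat.zero_le (κ l)))
          calc (max (mu (κ l + 1) j) 0 - mu (κ l + 1) j) / rho (κ l)
              ≤ eps' (κ l) / rho 0 := hd
            _ = (rho 0)⁻¹ * eps' (κ l) := by rw [div_eq_mul_inv, mul_comm]
      have hcollapse : (0:ℝ) • pgrad ν (θ ν) xbar
          + ∑ i, max (g i xbar) 0 • pgrad ν (g i) xbar
          + ∑ j ∈ Finset.univ.filter (fun j => ¬ h j xbar = 0), (0:ℝ) • pgrad ν (h j) xbar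
          + ∑ j ∈ Ph, (0:ℝ) • pgrad ν (h j) xbar = Ginf ν := by
        simp [hGinf_def]
      rw [hcollapse] at hmain
      exact hmain
    obtain ⟨β, hβ0, heqK⟩ :=
      akkt_to_kkt c hcC1 xbar hCPLD A hAact y hytend b hbnn G Ginf hGtend hStend
    -- convex comparison with a feasible point
    obtain ⟨z, hgz, hhz⟩ := hfeasible
    have hν0 : ∀ ν, ∑ i, max (g i xbar) 0 • pgrad ν (g i) xbar
        + ∑ s ∈ A, β s • pgrad ν (c s) xbar = 0 := by
      intro ν
      have h0 := congrFun heqK ν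
      simpa [hGinf_def, Finset.sum_apply] using h0
    have hgdiff' : ∀ i (w : Strat n), DifferentiableAt ℝ (g i) w :=
      fun i w => ((hgC1 i).differentiable one_ne_zero) w
    have hDg : ∀ i, g i xbar + ∑ ν, ⟪pgrad ν (g i) xbar, z ν - xbar ν⟫ ≤ g i z :=
      fun i => joint_ineq (hgconv i) (hgdiff' i xbar) z
    have hDh : ∀ j, h j xbar + ∑ ν, ⟪pgrad ν (h j) xbar, z ν - xbar ν⟫ ≤ h j z :=
      fun j => joint_ineq (hhconv j) (((hhC1 j).differentiable one_ne_zero) xbar) z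
    have hzero : ∑ i, max (g i xbar) 0 * (∑ ν, ⟪pgrad ν (g i) xbar, z ν - xbar ν⟫)
        + ∑ s ∈ A, β s * (∑ ν, ⟪pgrad ν (c s) xbar, z ν - xbar ν⟫) = 0 := by
      have h1 : ∀ ν, ∑ i, max (g i xbar) 0 * ⟪pgrad ν (g i) xbar, z ν - xbar ν⟫
          + ∑ s ∈ A, β s * ⟪pgrad ν (c s) xbar, z ν - xbar ν⟫ = 0 := by
        intro ν
        have h2 : ⟪∑ i, max (g i xbar) 0 • pgrad ν (g i) xbar
            + ∑ s ∈ A, β s • pgrad ν (c s) xbar, z ν - xbar ν⟫ = (0:ℝ) := by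
          rw [hν0 ν]; exact inner_zero_left _
        rw [inner_add_left, sum_inner, sum_inner] at h2
        simp only [real_inner_smul_left] at h2
        exact h2
      have h4 : ∑ i, max (g i xbar) 0 * (∑ ν, ⟪pgrad ν (g i) xbar, z ν - xbar ν⟫)
          + ∑ s ∈ A, β s * (∑ ν, ⟪pgrad ν (c s) xbar, z ν - xbar ν⟫)
          = ∑ ν, (∑ i, max (g i xbar) 0 * ⟪pgrad ν (g i) xbar, z ν - xbar ν⟫
            + ∑ s ∈ A, β s * ⟪pgrad ν (c s) xbar, z ν - xbar ν⟫) := by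
        rw [Finset.sum_add_distrib]
        congr 1
        · rw [Finset.sum_comm]
          exact Finset.sum_congr rfl fun i _ => by rw [Finset.mul_sum]
        · rw [Finset.sum_comm]
          exact Finset.sum_congr rfl fun s _ => by rw [Finset.mul_sum]
      rw [h4]
      exact Finset.sum_eq_zero fun ν _ => h1 ν
    have hsum_le : ∑ s ∈ A, β s * (∑ ν, ⟪pgrad ν (c s) xbar, z ν - xbar ν⟫) ≤ 0 := by
      apply Finset.sum_nonpos
      intro s hs
      have hact := hAact s hs
      have hle : (∑ ν, ⟪pgrad ν (c s) xbar, z ν - xbar ν⟫) ≤ c s z := by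
        cases s with
        | inl i =>
          simp only [hc_def, Sum.elim_inl] at hact ⊢
          linarith [hDg i]
        | inr j =>
          simp only [hc_def, Sum.elim_inr] at hact ⊢
          linarith [hDh j]
      have hz0 : c s z ≤ 0 := by
        cases s with
        | inl i => exact hgz i
        | inr j => exact hhz j
      exact mul_nonpos_of_nonneg_of_nonpos (hβ0 s) (hle.trans hz0)
    have hDgsum : 0 ≤ ∑ i, max (g i xbar) 0 * (∑ ν, ⟪pgrad ν (g i) xbar, z ν - xbar ν⟫) := by
      linarith [hzero, hsum_le]
    have hfin : ∑ i, (max (g i xbar) 0)^2 ≤ 0 := by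
      have h5 : ∀ i, max (g i xbar) 0 * (∑ ν, ⟪pgrad ν (g i) xbar, z ν - xbar ν⟫)
          ≤ max (g i xbar) 0 * g i z - (max (g i xbar) 0)^2 := by
        intro i
        have h6 : max (g i xbar) 0 * g i xbar = (max (g i xbar) 0)^2 := by
          rcases le_or_gt 0 (g i xbar) with hcc | hcc
          · rw [max_eq_left hcc]; ring
          · rw [max_eq_right hcc.le]; ring
        have h7 : max (g i xbar) 0 * (∑ ν, ⟪pgrad ν (g i) xbar, z ν - xbar ν⟫)
            ≤ max (g i xbar) 0 * (g i z - g i xbar) :=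
          mul_le_mul_of_nonneg_left (by linarith [hDg i]) (le_max_right _ _)
        rw [mul_sub] at h7
        linarith
      have h8 : ∑ i, max (g i xbar) 0 * g i z ≤ 0 :=
        Finset.sum_nonpos fun i _ => mul_nonpos_of_nonneg_of_nonpos (le_max_right _ _) (hgz i)
      have h9 := Finset.sum_le_sum (fun i (_ : i ∈ Finset.univ) => h5 i)
      rw [Finset.sum_sub_distrib] at h9
      linarith
    have hfeasg : ∀ i, g i xbar ≤ 0 := by
      intro i
      have hnn : ∀ i' ∈ Finset.univ, (0:ℝ) ≤ (max (g i' xbar) 0)^2 := fun i' _ => sq_nonneg _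
      have h10 : (max (g i xbar) 0)^2 = 0 :=
        (Finset.sum_eq_zero_iff_of_nonneg hnn).1
          (le_antisymm hfin (Finset.sum_nonneg hnn)) i (Finset.mem_univ i)
      have h11 : max (g i xbar) 0 = 0 := by
        nlinarith [sq_nonneg (max (g i xbar) 0), le_max_right (g i xbar) (0:ℝ), h10]
      exact max_eq_right_iff.1 h11
    exact ⟨hfeasg, hlam0⟩
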